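/- If σ and τ are exterior faces of a nondegenerate simplex α in a simplotope, then σ ∩ τ is also an exterior face of α (or empty). Precisely, if α has dimension N, σ has dimension n with N−n common zero coordinates, τ has dimension m with N−m common zero coordinates, and σ ∩ τ has dimension p, then σ and τ share exactly N−m−n+p common zero coordinates, so σ ∩ τ lies in a p-face of the simplotope. -/

import Mathlib

/-- A vertex of the simplotope `Π(c 1, …, c n)` in standard coordinates. -/
def IsSimplotopeVertex {n : ℕ} (c : Fin n → ℕ)
    (x : (Σ i : Fin n, Fin (c i + 1)) → ℝ) : Prop :=
  (∀ z, x z = 0 ∨ x z = 1) ∧ ∀ i : Fin n, ∑ j : Fin (c i + 1), x ⟨i, j⟩ = 1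

/-- The set of zero coordinates common to the vertices of `α` indexed by `U`. -/
def zeroCols {n : ℕ} (c : Fin n → ℕ) {N : ℕ}
    (w : Fin N → ((Σ i : Fin n, Fin (c i + 1)) → ℝ))
    (U : Finset (Fin N)) : Set (Σ i : Fin n, Fin (c i + 1)) :=
  {z | ∀ a ∈ U, w a z = 0}

open Classical Finset Set in
lemma keyBound {n : ℕ} (c : Fin n → ℕ)
    (w : Fin ((∑ i, c i) + 1) → ((Σ i : Fin n, Fin (c i + 1)) → ℝ))
    (hv : ∀ a, IsSimplotopeVertex c (w a)) (hindep : AffineIndependent ℝ w)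
    (U : Finset (Fin ((∑ i, c i) + 1))) (hU : U.Nonempty) :
    (zeroCols c w U).ncard + U.card ≤ (∑ i, c i) + 1 := by
  classical
  obtain ⟨a₀, ha₀⟩ := hU
  set Z : Finset (Σ i : Fin n, Fin (c i + 1)) := (zeroCols c w U).toFinset with hZ
  have hncard : (zeroCols c w U).ncard = Z.card := Set.ncard_eq_toFinset_card' _
  have hrow : ∀ i : Fin n, ∃ j : Fin (c i + 1), w a₀ ⟨i, j⟩ ≠ 0 := by
    intro i
    by_contra h
    push_neg at h
    have h2 := (hv a₀).2 i
    rw [Finset.sum_eq_zero (fun j _ => h j)] at h2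
    norm_num at h2
  choose jfun hjfun using hrow
  set zfun : Fin n → (Σ i : Fin n, Fin (c i + 1)) := fun i => ⟨i, jfun i⟩ with hzfun
  have hzZ : ∀ i, zfun i ∉ Z := by
    intro i hi
    rw [hZ, Set.mem_toFinset] at hi
    exact hjfun i (hi a₀ ha₀)
  have hzinj : Function.Injective zfun := by
    intro i i' h
    simpa [hzfun] using congrArg Sigma.fst h
  set K : Finset (Σ i : Fin n, Fin (c i + 1)) := Z ∪ Finset.image zfun Finset.univ with hK
  set s : Finset (Σ i : Fin n, Fin (c i + 1)) := Kᶜ with hs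
  have hKcard : K.card = Z.card + n := by
    rw [hK, Finset.card_union_of_disjoint, Finset.card_image_of_injective _ hzinj,
      Finset.card_univ, Fintype.card_fin]
    rw [Finset.disjoint_left]
    rintro z hzZ' hzim
    obtain ⟨i, -, rfl⟩ := Finset.mem_image.mp hzim
    exact hzZ i hzZ'
  have htotal : Fintype.card (Σ i : Fin n, Fin (c i + 1)) = (∑ i, c i) + n := by
    rw [Fintype.card_sigma]
    simp [Fintype.card_fin, Finset.sum_add_distrib]
  have hscard : s.card + K.card = (∑ i, c i) + n := by
    rw [hs, Finset.card_compl, htotal]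
    have : K.card ≤ (∑ i, c i) + n := htotal ▸ Finset.card_le_univ K
    omega
  set V : Submodule ℝ ((Σ i : Fin n, Fin (c i + 1)) → ℝ) :=
    { carrier := {x | (∀ z ∈ Z, x z = 0) ∧ ∀ i : Fin n, ∑ j : Fin (c i + 1), x ⟨i, j⟩ = 0}
      add_mem' := by
        rintro x y ⟨hx1, hx2⟩ ⟨hy1, hy2⟩
        refine ⟨fun z hz => by simp [hx1 z hz, hy1 z hz], fun i => ?_⟩
        simp [Finset.sum_add_distrib, hx2 i, hy2 i]
      zero_mem' := ⟨fun z _ => rfl, fun i => by simp⟩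
      smul_mem' := by
        rintro r x ⟨hx1, hx2⟩
        refine ⟨fun z hz => by simp [hx1 z hz], fun i => ?_⟩
        simp [← Finset.mul_sum, hx2 i] } with hV
  set φ : ((Σ i : Fin n, Fin (c i + 1)) → ℝ) →ₗ[ℝ] ({z // z ∈ s} → ℝ) :=
    LinearMap.funLeft ℝ ℝ (fun z : {z // z ∈ s} => (z : Σ i : Fin n, Fin (c i + 1))) with hφ
  have hVker : ∀ x ∈ V, φ x = 0 → x = 0 := by
    intro x hx hker
    obtain ⟨hx1, hx2⟩ := hx
    have hxs : ∀ z ∈ s, x z = 0 := by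
      intro z hz
      exact congrFun hker ⟨z, hz⟩
    have hnotz : ∀ z : (Σ i : Fin n, Fin (c i + 1)),
        (∀ i, z ≠ zfun i) → x z = 0 := by
      intro z hz
      by_cases hzmem : z ∈ Z
      · exact hx1 z hzmem
      · refine hxs z ?_
        rw [hs, Finset.mem_compl, hK, Finset.mem_union]
        push_neg
        refine ⟨hzmem, ?_⟩
        rw [Finset.mem_image]
        push_neg
        exact fun i _ => Ne.symm (hz i)
    funext z
    obtain ⟨i, j⟩ := z
    by_cases hj : j = jfun i
    · subst hj
      have h2 := hx2 i
      rw [← Finset.add_sum_erase _ _ (Finset.mem_univ (jfun i))] at h2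
      have hrest : ∑ j ∈ Finset.univ.erase (jfun i), x ⟨i, j⟩ = 0 := by
        refine Finset.sum_eq_zero fun j hjmem => ?_
        refine hnotz ⟨i, j⟩ fun i' h => ?_
        rw [hzfun] at h
        injection h with h1 h2'
        subst h1
        exact (Finset.mem_erase.mp hjmem).1 (eq_of_heq h2')
      rw [hrest] at h2
      simpa using h2
    · refine hnotz ⟨i, j⟩ fun i' h => ?_
      rw [hzfun] at h
      injection h with h1 h2'
      subst h1
      exact hj (eq_of_heq h2')
  have hindepU : AffineIndependent ℝ (fun a : {x // x ∈ U} => w a) := by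
    have := hindep.comp_embedding (Function.Embedding.subtype (· ∈ U))
    exact this
  have hli : LinearIndependent ℝ
      (fun a : {x : {x // x ∈ U} // x ≠ ⟨a₀, ha₀⟩} => w a - w a₀) := by
    have := (affineIndependent_iff_linearIndependent_vsub ℝ
      (fun a : {x // x ∈ U} => w a) ⟨a₀, ha₀⟩).mp hindepU
    simpa [vsub_eq_sub] using this
  have hmem : ∀ a : {x : {x // x ∈ U} // x ≠ ⟨a₀, ha₀⟩}, (w a - w a₀) ∈ V := by
    intro a
    constructor
    · intro z hz
      rw [hZ, Set.mem_toFinset] at hz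
      have h1 := hz _ a.1.2
      have h2 := hz _ ha₀
      simp only [Pi.sub_apply, h1, h2, sub_self]
    · intro i
      simp only [Pi.sub_apply, Finset.sum_sub_distrib, (hv _).2 i, sub_self]
  have hli2 : LinearIndependent ℝ
      (fun a : {x : {x // x ∈ U} // x ≠ ⟨a₀, ha₀⟩} => φ (w a - w a₀)) := by
    refine hli.map (f := φ) ?_
    rw [Submodule.disjoint_def]
    intro x hxspan hxker
    refine hVker x ?_ (LinearMap.mem_ker.mp hxker)
    have hle : Submodule.span ℝ (Set.range fun a : {x : {x // x ∈ U} // x ≠ ⟨a₀, ha₀⟩} =>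
        w a - w a₀) ≤ V := by
      rw [Submodule.span_le]
      rintro y ⟨a, rfl⟩
      exact hmem a
    exact hle hxspan
  have hcard1 : Fintype.card {x : {x // x ∈ U} // x ≠ ⟨a₀, ha₀⟩} ≤
      Module.finrank ℝ ({z // z ∈ s} → ℝ) := hli2.fintype_card_le_finrank
  rw [Module.finrank_pi, Fintype.card_coe] at hcard1
  have hcard2 : Fintype.card {x : {x // x ∈ U} // x ≠ ⟨a₀, ha₀⟩} = U.card - 1 := by
    have h3 : Fintype.card {x : {x // x ∈ U} // ¬ (x = ⟨a₀, ha₀⟩)} =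
        Fintype.card {x // x ∈ U} - Fintype.card {x : {x // x ∈ U} // x = ⟨a₀, ha₀⟩} :=
      Fintype.card_subtype_compl _
    rw [Fintype.card_subtype_eq, Fintype.card_coe] at h3
    exact h3
  have hU1 : 1 ≤ U.card := Finset.card_pos.mpr ⟨a₀, ha₀⟩
  rw [hncard]
  omega

/-- If `σ` and `τ` are exterior faces of a nondegenerate maximal simplex `α` (vertices `w`)
in a simplotope of dimension `N = ∑ cᵢ`, where `σ` has dimension `n' = |S| − 1` with
exactly `N − n'` common zero coordinates and `τ` has dimension `m = |T| − 1` with exactly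
`N − m` common zero coordinates, and `σ ∩ τ` is nonempty of dimension `p = |S ∩ T| − 1`,
then `σ` and `τ` share exactly `N − m − n' + p` common zero coordinates; hence `σ ∩ τ` lies
in a common `p`-face of the simplotope and is an exterior face of `α`. -/
theorem stmt12 {n : ℕ} (c : Fin n → ℕ)
    (w : Fin ((∑ i, c i) + 1) → ((Σ i : Fin n, Fin (c i + 1)) → ℝ))
    (hv : ∀ a, IsSimplotopeVertex c (w a)) (hindep : AffineIndependent ℝ w)
    (S T : Finset (Fin ((∑ i, c i) + 1)))
    (hS : (zeroCols c w S).ncard + (S.card - 1) = ∑ i, c i)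
    (hT : (zeroCols c w T).ncard + (T.card - 1) = ∑ i, c i)
    (hST : (S ∩ T).Nonempty) :
    (zeroCols c w (S ∪ T)).ncard + S.card + T.card = (∑ i, c i) + (S ∩ T).card + 1 := by
  classical
  obtain ⟨a, ha⟩ := hST
  have haS : a ∈ S := (Finset.mem_inter.mp ha).1
  have haT : a ∈ T := (Finset.mem_inter.mp ha).2
  have hSne : 1 ≤ S.card := Finset.card_pos.mpr ⟨a, haS⟩
  have hTne : 1 ≤ T.card := Finset.card_pos.mpr ⟨a, haT⟩
  have h1 : zeroCols c w (S ∪ T) = zeroCols c w S ∩ zeroCols c w T := by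
    ext z
    simp only [zeroCols, Set.mem_setOf_eq, Set.mem_inter_iff, Finset.mem_union]
    constructor
    · exact fun h => ⟨fun b hb => h b (Or.inl hb), fun b hb => h b (Or.inr hb)⟩
    · rintro ⟨h1, h2⟩ b (hb | hb)
      exacts [h1 b hb, h2 b hb]
  have h2 : zeroCols c w S ∪ zeroCols c w T ⊆ zeroCols c w (S ∩ T) := by
    rintro z (hz | hz) b hb
    exacts [hz b (Finset.mem_inter.mp hb).1, hz b (Finset.mem_inter.mp hb).2]
  have kInter := keyBound c w hv hindep (S ∩ T) ⟨a, ha⟩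
  have kUnion := keyBound c w hv hindep (S ∪ T) ⟨a, Finset.mem_union_left _ haS⟩
  have hmono : (zeroCols c w S ∪ zeroCols c w T).ncard ≤ (zeroCols c w (S ∩ T)).ncard :=
    Set.ncard_le_ncard h2 (Set.toFinite _)
  have hie : (zeroCols c w S ∪ zeroCols c w T).ncard +
      (zeroCols c w S ∩ zeroCols c w T).ncard =
      (zeroCols c w S).ncard + (zeroCols c w T).ncard :=
    Set.ncard_union_add_ncard_inter _ _
  have hfie : (S ∪ T).card + (S ∩ T).card = S.card + T.card :=
    Finset.card_union_add_card_inter S T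
  rw [h1] at kUnion ⊢
  omega
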